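/- Every homogeneously adequate state x admits, for any marked point p on a circle away from crossing arcs, two enhancements X⁻ and X⁺, identical away from p, with the circle through p labeled 1 in X⁻ and 0 in X⁺, such that every A-zone has at most one 0-labeled circle and every B-zone has at most one 1-labeled circle in both X⁺ and X⁻. In particular j(X⁺) = j(X⁻) + 2. -/

import Mathlib

/-- Swap the labels on the two endpoint circles of a crossing arc. -/
def swapAt {n : ℕ} (e : Fin n × Fin n) (a : Fin n → Bool) : Fin n → Bool :=
  Function.update (Function.update a e.1 (a e.2)) e.2 (a e.1)

/-- The equivalence relation `∼_A` (for `v = true`) resp. `∼_B` (for `v = false`) on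
enhancements of a state, generated by swapping the labels on the two endpoint circles of
an arc of the corresponding type (`sm t = true` means an A-arc at crossing `t`, and
`ep t` gives the two circles the arc joins). -/
def RelLab {c n : ℕ} (sm : Fin c → Bool) (ep : Fin c → Fin n × Fin n) (v : Bool) :
    (Fin n → Bool) → (Fin n → Bool) → Prop :=
  Relation.ReflTransGen fun a b => ∃ t, sm t = v ∧ b = swapAt (ep t) a

/-- Connectivity of circles through arcs of a fixed type: `Conn sm ep true i j` says the
circles `i`, `j` lie in the same A-zone (`v = false`: same B-zone). -/
def Conn {c n : ℕ} (sm : Fin c → Bool) (ep : Fin c → Fin n × Fin n) (v : Bool) :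
    Fin n → Fin n → Prop :=
  Relation.ReflTransGen fun i j => ∃ t, sm t = v ∧ (ep t = (i, j) ∨ ep t = (j, i))

/-- Homogeneity of a state: no simple cycle of the state graph contains arcs of both
types (equivalently, every block of the state graph is all-A or all-B). -/
def Homog {c n : ℕ} (sm : Fin c → Bool) (ep : Fin c → Fin n × Fin n) : Prop :=
  ∀ (k : ℕ), 2 ≤ k → ∀ (te : ZMod k → Fin c) (ve : ZMod k → Fin n),
    Function.Injective te → Function.Injective ve →
    (∀ i, ep (te i) = (ve i, ve (i + 1)) ∨ ep (te i) = (ve (i + 1), ve i)) →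
    ∀ i j, sm (te i) = sm (te j)

namespace HAE

open List

variable {c n : ℕ}

/-- Untyped adjacency of circles. -/
def AdjU (ep : Fin c → Fin n × Fin n) (i j : Fin n) : Prop :=
  ∃ t, ep t = (i, j) ∨ ep t = (j, i)

/-- Typed adjacency of circles. -/
def Av (sm : Fin c → Bool) (ep : Fin c → Fin n × Fin n) (w : Bool) (i j : Fin n) : Prop :=
  ∃ t, sm t = w ∧ (ep t = (i, j) ∨ ep t = (j, i))

variable {sm : Fin c → Bool} {ep : Fin c → Fin n × Fin n}

lemma adjU_symm {i j : Fin n} (h : AdjU ep i j) : AdjU ep j i := by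
  obtain ⟨t, ht⟩ := h; exact ⟨t, ht.symm⟩

lemma av_symm {w} {i j : Fin n} (h : Av sm ep w i j) : Av sm ep w j i := by
  obtain ⟨t, h1, h2⟩ := h; exact ⟨t, h1, h2.symm⟩

lemma av_adjU {w} {i j : Fin n} (h : Av sm ep w i j) : AdjU ep i j := by
  obtain ⟨t, _, h2⟩ := h; exact ⟨t, h2⟩

lemma conn_eq (v : Bool) : Conn sm ep v = Relation.ReflTransGen (Av sm ep v) := rfl

/-- Applying homogeneity to a cycle given by a vertex function and types of edges. -/
lemma homogCycle (hhom : Homog sm ep) {k : ℕ} (hk : 2 ≤ k)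
    (Vf : ZMod k → Fin n) (S : ZMod k → Bool)
    (hVinj : Function.Injective Vf)
    (hadjc : ∀ a : ZMod k, ∃ t, sm t = S a ∧
      (ep t = (Vf a, Vf (a + 1)) ∨ ep t = (Vf (a + 1), Vf a)))
    (a b : ZMod k) : S a = S b := by
  haveI : NeZero k := ⟨by omega⟩
  classical
  choose te hsm hpair using hadjc
  by_cases hinj : Function.Injective te
  · have := hhom k hk te Vf hinj hVinj hpair a b
    rw [hsm a, hsm b] at this; exact this
  · rw [Function.not_injective_iff] at hinj
    obtain ⟨x, y, hte, hxy⟩ := hinj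
    have hset : S x = S y := by rw [← hsm x, ← hsm y, hte]
    have hyx : y = x + 1 ∧ x = y + 1 := by
      rcases hpair x with h1 | h1 <;> rcases hpair y with h2 | h2 <;>
        rw [hte, h2, Prod.mk.injEq] at h1
      · exact absurd (hVinj h1.1) (Ne.symm hxy)
      · exact ⟨hVinj h1.2, (hVinj h1.1).symm⟩
      · exact ⟨hVinj h1.1, (hVinj h1.2).symm⟩
      · exact absurd (hVinj h1.2) (Ne.symm hxy)
    have hx2 : x = x + 2 := by
      calc x = y + 1 := hyx.2
      _ = (x + 1) + 1 := by rw [hyx.1]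
      _ = x + 2 := by ring
    have h20 : ((2 : ℕ) : ZMod k) = 0 := by
      have := left_eq_add.mp hx2
      exact_mod_cast this
    have hdvd : k ∣ 2 := (ZMod.natCast_eq_zero_iff 2 k).mp h20
    have hk2 : k = 2 := by
      have := Nat.le_of_dvd (by norm_num) hdvd
      omega
    subst hk2
    have hall : ∀ z u : ZMod 2, u = z ∨ u = z + 1 := by decide
    have hy' : y = x + 1 := hyx.1
    rcases hall x a with ha | ha <;> rcases hall x b with hb | hb <;>
      subst ha <;> subst hb <;> simp [← hy', hset]

/-- Parallel arcs of distinct types are impossible. -/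
lemma noMixedEdge (hadq : ∀ t, (ep t).1 ≠ (ep t).2) (hhom : Homog sm ep)
    {i j : Fin n} (h1 : Av sm ep true i j) (h0 : Av sm ep false i j) : False := by
  obtain ⟨t1, ht1, hp1⟩ := h1
  obtain ⟨t0, ht0, hp0⟩ := h0
  have hij : i ≠ j := by
    rcases hp1 with h | h <;> have := hadq t1 <;> rw [h] at this
    · exact this
    · exact Ne.symm this
  classical
  have h01 : ∀ a b : ZMod 2, a ≠ b → (a = 0 ∧ b = 1) ∨ (a = 1 ∧ b = 0) := by decide
  have := homogCycle hhom (k := 2) le_rfl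
    (fun a => if a = 0 then i else j) (fun a => decide (a = 0))
    (by
      intro a b hab
      by_contra hne
      rcases h01 a b hne with ⟨ha, hb⟩ | ⟨ha, hb⟩ <;> subst ha <;> subst hb <;>
        simp [show (1 : ZMod 2) ≠ 0 by decide] at hab
      · exact hij hab
      · exact hij hab.symm)
    (by
      intro a
      rcases (show ∀ a : ZMod 2, a = 0 ∨ a = 1 by decide) a with rfl | rfl
      · refine ⟨t1, by simpa using ht1, ?_⟩
        have h01 : ((0 : ZMod 2) + 1) = 1 := by decide
        simpa [h01, show (1 : ZMod 2) ≠ 0 by decide] using hp1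
      · refine ⟨t0, by simpa using ht0, ?_⟩
        have h10 : ((1 : ZMod 2) + 1) = 0 := by decide
        simpa [h10, show (1 : ZMod 2) ≠ 0 by decide] using hp0.symm)
    0 1
  simp at this

/-- From any chain we can extract a duplicate-free chain with the same endpoints. -/
lemma chain_dedup {α : Type*} {r : α → α → Prop} :
    ∀ (L : List α) (x : α), List.Chain r x L →
    ∃ L', List.Chain r x L' ∧ (x :: L').Nodup ∧
      (x :: L').getLast (List.cons_ne_nil _ _) = (x :: L).getLast (List.cons_ne_nil _ _) := by
  intro L
  induction L with
  | nil => exact fun x _ => ⟨[], List.Chain.nil, by simp, rfl⟩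
  | cons a L ih =>
    intro x hch
    change List.IsChain r (x :: a :: L) at hch
    rw [List.chain_cons] at hch
    obtain ⟨L'', h1, h2, h3⟩ := ih a hch.2
    rw [List.getLast_cons_cons]
    by_cases hx : x ∈ a :: L''
    · obtain ⟨pre, suf, hsplit⟩ := List.append_of_mem hx
      have hch' : List.Chain' r (a :: L'') := h1
      have hsuf : (x :: suf) <:+ (a :: L'') := ⟨pre, hsplit.symm⟩
      refine ⟨suf, List.IsChain.suffix hch' hsuf, (hsuf.sublist.nodup h2), ?_⟩
      have key : ∀ (M : List α) (hM : M ≠ []), M = pre ++ x :: suf →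
          M.getLast hM = (x :: suf).getLast (List.cons_ne_nil _ _) := by
        intro M hM hMe
        subst hMe
        exact List.getLast_append_of_ne_nil _ (List.cons_ne_nil _ _)
      rw [← key (a :: L'') (List.cons_ne_nil _ _) hsplit, h3]
    · refine ⟨a :: L'', List.chain_cons.mpr ⟨hch.1, h1⟩, ?_, ?_⟩
      · exact List.nodup_cons.mpr ⟨hx, h2⟩
      · rw [List.getLast_cons_cons, h3]

/-- A nonempty simple path from `z` to `x` whose first edge has type `w`. -/
def Gd (sm : Fin c → Bool) (ep : Fin c → Fin n × Fin n) (w : Bool) (z x : Fin n) : Prop :=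
  ∃ (a : Fin n) (L : List (Fin n)), Av sm ep w z a ∧
    List.Chain' (AdjU ep) (z :: a :: L) ∧ (z :: a :: L).Nodup ∧
    (a :: L).getLast (List.cons_ne_nil _ _) = x

lemma gd_ne {w} {z x : Fin n} (h : Gd sm ep w z x) : z ≠ x := by
  obtain ⟨a, L, _, _, hnd, hlast⟩ := h
  have hx : x ∈ a :: L := hlast ▸ List.getLast_mem _
  have := (List.nodup_cons.mp hnd).1
  exact fun hzx => this (hzx ▸ hx)

lemma gd_of_rtg {w} {x y : Fin n} (h : Relation.ReflTransGen (Av sm ep w) x y)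
    (hxy : x ≠ y) : Gd sm ep w x y := by
  obtain ⟨l, hch, hlast⟩ := List.exists_isChain_cons_of_relationReflTransGen h
  obtain ⟨L', h1, h2, h3⟩ := chain_dedup l x hch
  rw [hlast] at h3
  match L', h1, h2, h3 with
  | [], _, _, h3 => exact absurd h3 hxy
  | a :: L₂, h1, h2, h3 =>
    change List.IsChain _ (_ :: a :: L₂) at h1
    rw [List.chain_cons] at h1
    refine ⟨a, L₂, h1.1, ?_, h2, ?_⟩
    · exact List.Chain.imp (fun a b hh => av_adjU hh) (List.chain_cons.mpr h1)
    · rw [List.getLast_cons_cons] at h3; exact h3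

lemma gd_of_list {w : Bool} (P : List (Fin n)) (hch : P.Chain' (AdjU ep)) (hnd : P.Nodup)
    {z x aa : Fin n} (hhead : P.head? = some z) (h2 : P.tail.head? = some aa)
    (hlast : P.getLast? = some x) (hw : Av sm ep w z aa) : Gd sm ep w z x := by
  match P, hch, hnd, hhead, h2, hlast with
  | [], _, _, hhead, _, _ => simp at hhead
  | [z'], _, _, _, h2, _ => simp at h2
  | z' :: a' :: L, hch, hnd, hhead, h2, hlast =>
    obtain rfl : z' = z := by simpa using hhead
    obtain rfl : a' = aa := by simpa using h2
    refine ⟨a', L, hw, hch, hnd, ?_⟩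
    rw [List.getLast?_eq_getLast (List.cons_ne_nil _ _)] at hlast
    have := Option.some.inj hlast
    rw [List.getLast_cons_cons] at this
    exact this

/-- A "cycle" (simple closed path) whose first edge has type `true` and whose closing
edge has type `false` contradicts homogeneity: auxiliary version. -/
lemma mixedCycleAux (hadq : ∀ t, (ep t).1 ≠ (ep t).2) (hhom : Homog sm ep)
    {b' : Fin n} (z' a' : Fin n) (C₂ : List (Fin n))
    (hnd : (z' :: a' :: C₂).Nodup) (hch : (z' :: a' :: C₂).Chain' (AdjU ep))
    (hlast' : (z' :: a' :: C₂).getLast (List.cons_ne_nil _ _) = b')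
    (h1 : Av sm ep true z' a') (h0 : Av sm ep false b' z') : False := by
  classical
  set C : List (Fin n) := z' :: a' :: C₂ with hC
  have hCne : C ≠ [] := by simp [hC]
  set k := C.length with hk
  have hlen : k = C₂.length + 2 := by rw [hk, hC]; simp [List.length_cons]
  have hk2 : 2 ≤ k := by omega
  haveI : NeZero k := ⟨by omega⟩
  haveI : Fact (1 < k) := ⟨by omega⟩
  have hgc : ∀ (i1 i2 : ℕ) (hi1 : i1 < C.length) (hi2 : i2 < C.length), i1 = i2 →
      C.get ⟨i1, hi1⟩ = C.get ⟨i2, hi2⟩ := by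
    intro i1 i2 hi1 hi2 h; subst h; rfl
  have hvlt : ∀ u : ZMod k, u.val < C.length := fun u => ZMod.val_lt u
  set Vf : ZMod k → Fin n := fun u => C.get ⟨u.val, hvlt u⟩ with hVf
  have hVinj : Function.Injective Vf := by
    intro u v huv
    have : C.get ⟨u.val, hvlt u⟩ = C.get ⟨v.val, hvlt v⟩ := huv
    have := List.nodup_iff_injective_get.mp hnd this
    have hval : u.val = v.val := by simpa using congrArg Fin.val this
    exact ZMod.val_injective k hval
  have hvaladd : ∀ u : ZMod k, (u + 1).val = (u.val + 1) % k := by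
    intro u
    rw [ZMod.val_add, ZMod.val_one]
  have hgetlast : C.get ⟨C.length - 1, by omega⟩ = b' := by
    rw [List.get_eq_getElem, ← List.getLast_eq_getElem hCne]; exact hlast'
  have hadjZ : ∀ u : ZMod k, ∃ t,
      ep t = (Vf u, Vf (u + 1)) ∨ ep t = (Vf (u + 1), Vf u) := by
    intro u
    by_cases hu : u.val + 1 < k
    · have h2 : (u + 1).val = u.val + 1 := by rw [hvaladd, Nat.mod_eq_of_lt hu]
      have hrel := List.isChain_iff_getElem.mp hch u.val (by omega)
      have e1 : Vf u = C.get ⟨u.val, by omega⟩ := rfl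
      have e2 : Vf (u + 1) = C.get ⟨u.val + 1, by omega⟩ := hgc _ _ _ _ h2
      rw [e1, e2]
      exact hrel
    · have hu' : u.val = k - 1 := by have := ZMod.val_lt u; omega
      have h2 : (u + 1).val = 0 := by
        rw [hvaladd, hu']
        have h3 : k - 1 + 1 = k := by omega
        rw [h3, Nat.mod_self]
      have e1 : Vf u = b' := by
        have h4 : Vf u = C.get ⟨C.length - 1, by omega⟩ := hgc _ _ _ _ (by omega)
        rw [h4, hgetlast]
      have e2 : Vf (u + 1) = z' := by
        have h4 : Vf (u + 1) = C.get ⟨0, by omega⟩ := hgc _ _ _ _ h2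
        rw [h4]; rfl
      rw [e1, e2]
      obtain ⟨t, _, hp⟩ := h0
      exact ⟨t, hp⟩
  choose T hT using hadjZ
  set S : ZMod k → Bool := fun u => sm (T u) with hS
  set u₀ : ZMod k := ((k - 1 : ℕ) : ZMod k) with hu₀
  have hhc := homogCycle hhom hk2 Vf S hVinj (fun u => ⟨T u, rfl, hT u⟩) 0 u₀
  have hv0 : (0 : ZMod k).val = 0 := ZMod.val_zero
  have hv1 : (1 : ZMod k).val = 1 := ZMod.val_one k
  have hVf0 : Vf 0 = z' := by
    have h4 : Vf 0 = C.get ⟨0, by omega⟩ := hgc _ _ _ _ hv0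
    rw [h4]; rfl
  have hVf1 : Vf 1 = a' := by
    have h4 : Vf 1 = C.get ⟨1, by omega⟩ := hgc _ _ _ _ hv1
    rw [h4]; rfl
  have h01 : (0 : ZMod k) + 1 = 1 := by rw [zero_add]
  have hvu₀ : u₀.val = k - 1 := by
    rw [hu₀, ZMod.val_natCast, Nat.mod_eq_of_lt (by omega)]
  have hu₀1 : u₀ + 1 = 0 := by
    rw [hu₀]
    have h5 : ((k - 1 : ℕ) : ZMod k) + 1 = ((k - 1 + 1 : ℕ) : ZMod k) := by push_cast; ring
    rw [h5]
    have h6 : k - 1 + 1 = k := by omega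
    rw [h6, ZMod.natCast_self]
  have hVfu₀ : Vf u₀ = b' := by
    have h4 : Vf u₀ = C.get ⟨C.length - 1, by omega⟩ := hgc _ _ _ _ (by omega)
    rw [h4, hgetlast]
  have hS0 : S 0 = true := by
    by_contra hcon
    have hc' : S 0 = false := by
      cases hS0 : S 0
      · rfl
      · exact absurd hS0 hcon
    have hT0 := hT 0
    rw [h01, hVf0, hVf1] at hT0
    exact noMixedEdge hadq hhom h1 ⟨T 0, hc', hT0⟩
  have hSu₀ : S u₀ = false := by
    by_contra hcon
    have hc' : S u₀ = true := by
      cases hS0 : S u₀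
      · exact absurd hS0 hcon
      · rfl
    have hTu := hT u₀
    rw [hu₀1, hVfu₀, hVf0] at hTu
    exact noMixedEdge hadq hhom ⟨T u₀, hc', hTu⟩ h0
  rw [hS0, hSu₀] at hhc
  exact Bool.noConfusion hhc

/-- A "cycle" (simple closed path) whose first edge has type `true` and whose closing
edge has type `false` contradicts homogeneity. -/
lemma mixedCycleFalse (hadq : ∀ t, (ep t).1 ≠ (ep t).2) (hhom : Homog sm ep)
    {z aa b' : Fin n} (C : List (Fin n))
    (hnd : C.Nodup) (hch : C.Chain' (AdjU ep))
    (hhead : C.head? = some z) (hsec : C.tail.head? = some aa)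
    (hlast : C.getLast? = some b')
    (h1 : Av sm ep true z aa) (h0 : Av sm ep false b' z) : False := by
  match C, hnd, hch, hhead, hsec, hlast with
  | [], _, _, hhead, _, _ => simp at hhead
  | [_], _, _, _, hsec, _ => simp at hsec
  | z' :: a' :: C₂, hnd, hch, hhead, hsec, hlast =>
    obtain rfl : z' = z := by simpa using hhead
    obtain rfl : a' = aa := by simpa using hsec
    have hlast'' : (z' :: a' :: C₂).getLast (List.cons_ne_nil _ _) = b' := by
      rw [List.getLast?_eq_getLast (List.cons_ne_nil _ _)] at hlast
      exact Option.some.inj hlast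
    exact mixedCycleAux hadq hhom z' a' C₂ hnd hch hlast'' h1 h0

lemma head_dropWhile_mem {α : Type*} (p : α → Bool) (l : List α) (h : l.dropWhile p ≠ []) :
    p ((l.dropWhile p).head h) = false := by
  simpa using List.head_dropWhile_not p h

/-- Two simple paths with the same endpoints whose first edges have different types
contradict homogeneity. -/
lemma twoPaths (hadq : ∀ t, (ep t).1 ≠ (ep t).2) (hhom : Homog sm ep) {z x : Fin n}
    (hGT : Gd sm ep true z x) (hGF : Gd sm ep false z x) : False := by
  classical
  obtain ⟨a, L, haT, hchP, hndP, hlastP⟩ := hGT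
  obtain ⟨b, M, hbF, hchQ, hndQ, hlastQ⟩ := hGF
  set Pt : List (Fin n) := a :: L with hPt
  set Qt : List (Fin n) := b :: M with hQt
  have hxP : x ∈ Pt := hlastP ▸ List.getLast_mem _
  have hxQ : x ∈ Qt := hlastQ ▸ List.getLast_mem _
  have hzP : z ∉ Pt := (List.nodup_cons.mp hndP).1
  have hzQ : z ∉ Qt := (List.nodup_cons.mp hndQ).1
  have hndPt : Pt.Nodup := (List.nodup_cons.mp hndP).2
  have hndQt : Qt.Nodup := (List.nodup_cons.mp hndQ).2
  set p1 : Fin n → Bool := fun u => decide (u ∉ Qt) with hp1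
  set U := Pt.takeWhile p1 with hU
  set rest := Pt.dropWhile p1 with hrest
  have hsplit : U ++ rest = Pt := List.takeWhile_append_dropWhile (p := p1) (l := Pt)
  have hrne : rest ≠ [] := by
    intro hemp
    rw [hrest] at hemp
    have h2 := List.dropWhile_eq_nil_iff.mp hemp x hxP
    simp [hp1] at h2
    exact h2 hxQ
  set v := rest.head hrne with hv
  have hrv : rest = v :: rest.tail := by rw [hv]; exact (List.cons_head_tail _).symm
  have hvQ : v ∈ Qt := by
    have h2 : p1 v = false := head_dropWhile_mem p1 Pt hrne
    simpa [hp1] using h2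
  have hUQ : ∀ u ∈ U, u ∉ Qt := by
    intro u hu
    have h2 := List.mem_takeWhile_imp hu
    simpa [hp1] using h2
  set p2 : Fin n → Bool := fun u => decide (u ≠ v) with hp2
  set V₁ := Qt.takeWhile p2 with hV₁
  set rQ := Qt.dropWhile p2 with hrQ
  have hsplitQ : V₁ ++ rQ = Qt := List.takeWhile_append_dropWhile (p := p2) (l := Qt)
  have hrQne : rQ ≠ [] := by
    intro hemp
    rw [hrQ] at hemp
    have h2 := List.dropWhile_eq_nil_iff.mp hemp v hvQ
    simp [hp2] at h2
  have hrQhead : rQ.head hrQne = v := by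
    have h2 : p2 (rQ.head hrQne) = false := head_dropWhile_mem p2 Qt hrQne
    simpa [hp2] using h2
  have hrQv : rQ = v :: rQ.tail := by
    conv_lhs => rw [← List.cons_head_tail hrQne]
    rw [hrQhead]
  have hV₁v : ∀ u ∈ V₁, u ≠ v := by
    intro u hu
    have h2 := List.mem_takeWhile_imp hu
    simpa [hp2] using h2
  have hV₁sub : ∀ u ∈ V₁, u ∈ Qt := by
    intro u hu
    exact (List.takeWhile_prefix p2).sublist.subset hu
  -- the cycle
  set Cy : List (Fin n) := (z :: U) ++ (v :: V₁.reverse) with hCy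
  have hrightrev : (v :: V₁.reverse) = (V₁ ++ [v]).reverse := by
    simp
  have hprefP : (z :: U) <+: (z :: Pt) := ⟨rest, by rw [List.cons_append, hsplit]⟩
  have hprefQ : (V₁ ++ [v]) <+: Qt := by
    refine ⟨rQ.tail, ?_⟩
    rw [List.append_assoc, List.singleton_append, ← hrQv, hsplitQ]
  -- nodup
  have hndC : Cy.Nodup := by
    rw [hCy, List.nodup_append]
    refine ⟨hprefP.sublist.nodup hndP, ?_, ?_⟩
    · rw [hrightrev, List.nodup_reverse, List.nodup_append]
      refine ⟨(List.takeWhile_prefix p2).sublist.nodup hndQt, List.nodup_singleton v, ?_⟩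
      intro u hu
      simp only [List.mem_singleton]
      rintro _ rfl
      exact hV₁v u hu
    · intro u hu u' hu' huu
      subst huu
      have huQ : u ∈ Qt := by
        rcases List.mem_cons.mp hu' with h | h
        · exact h ▸ hvQ
        · exact hV₁sub u (List.mem_reverse.mp h)
      rcases List.mem_cons.mp hu with h | h
      · exact hzQ (h ▸ huQ)
      · exact hUQ u h huQ
  -- chain
  have hchP' : ((z :: U) ++ rest).Chain' (AdjU ep) := by
    rw [List.cons_append, hsplit]; exact hchP
  have hrhead : rest.head? = some v := by rw [hrv]; rfl
  have hchC : Cy.Chain' (AdjU ep) := by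
    show List.IsChain _ _
    rw [hCy, List.isChain_append]
    refine ⟨(List.isChain_append.mp hchP').1, ?_, ?_⟩
    · rw [hrightrev, List.isChain_reverse]
      exact List.IsChain.imp (fun a b h => adjU_symm h) ((List.IsChain.tail hchQ).prefix hprefQ)
    · intro x' hx' y' hy'
      simp only [List.head?_cons, Option.mem_def, Option.some.injEq] at hy'
      subst hy'
      have := (List.isChain_append.mp hchP').2.2 x' hx' v (by rw [hrhead]; rfl)
      exact this
  -- head and second element
  have hheadC : Cy.head? = some z := by rw [hCy]; rfl
  have hsecC : Cy.tail.head? = some a := by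
    rw [hCy]
    by_cases haQ : a ∈ Qt
    · have hU0 : U = [] := by
        rw [hU, hPt]
        apply List.takeWhile_cons_of_neg
        simp [hp1, haQ]
      have hva : v = a := by
        have : rest = Pt := by
          rw [hrest, hPt]
          apply List.dropWhile_cons_of_neg
          simp [hp1, haQ]
        have h5 : ∀ (R : List (Fin n)) (hR : R ≠ []), R = Pt → R.head hR = a := by
          intro R hR hRe
          subst hRe
          rfl
        rw [hv]
        exact h5 rest hrne this
      rw [hU0, hva]; rfl
    · have hU1 : U = a :: L.takeWhile p1 := by
        rw [hU, hPt]
        apply List.takeWhile_cons_of_pos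
        simp [hp1, haQ]
      rw [hU1]; rfl
  -- last element
  have hlastC : Cy.getLast? = some b := by
    rw [hCy, List.getLast?_append_of_ne_nil _ (List.cons_ne_nil _ _)]
    by_cases hbv : b = v
    · have hV₁0 : V₁ = [] := by
        rw [hV₁, hQt]
        apply List.takeWhile_cons_of_neg
        simp [hp2, hbv]
      rw [hV₁0, hbv]; rfl
    · have hV₁1 : V₁ = b :: M.takeWhile p2 := by
        rw [hV₁, hQt]
        apply List.takeWhile_cons_of_pos
        simp [hp2, hbv]
      have hVne : V₁.reverse ≠ [] := by rw [hV₁1]; simp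
      have h4 : (v :: V₁.reverse).getLast? = V₁.reverse.getLast? := by
        rw [show (v :: V₁.reverse) = [v] ++ V₁.reverse by rfl,
          List.getLast?_append_of_ne_nil _ hVne]
      rw [h4, List.getLast?_reverse, hV₁1]
      rfl
  exact mixedCycleFalse hadq hhom Cy hndC hchC hheadC hsecC hlastC haT (av_symm hbF)

lemma twoPaths' (hadq : ∀ t, (ep t).1 ≠ (ep t).2) (hhom : Homog sm ep) {z x : Fin n}
    {w w' : Bool} (hne : w ≠ w')
    (h1 : Gd sm ep w z x) (h2 : Gd sm ep w' z x) : False := by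
  cases w <;> cases w'
  · exact absurd rfl hne
  · exact twoPaths hadq hhom h2 h1
  · exact twoPaths hadq hhom h1 h2
  · exact absurd rfl hne

lemma chain'_head_rel {α : Type*} {r : α → α → Prop} {l : List α} {x y : α}
    (h : l.Chain' r) (h1 : l.head? = some x) (h2 : l.tail.head? = some y) : r x y := by
  match l, h, h1, h2 with
  | [], _, h1, _ => simp at h1
  | [_], _, _, h2 => simp at h2
  | a :: b :: l, h, h1, h2 =>
    obtain rfl : a = x := by simpa using h1
    obtain rfl : b = y := by simpa using h2
    exact (List.isChain_cons_cons.mp h).1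

/-- Key splicing lemma: if `i ≁ j` are joined by a `w`-typed simple path, and both have
simple paths to a common point `bb` starting with `w'`-typed edges (`w ≠ w'`), we get a
contradiction with homogeneity. -/
lemma Lgen (hadq : ∀ t, (ep t).1 ≠ (ep t).2) (hhom : Homog sm ep)
    {w w' : Bool} (hww : w ≠ w') {i j bb : Fin n} (hij : i ≠ j)
    (hconn : Relation.ReflTransGen (Av sm ep w) i j)
    (hi : Gd sm ep w' i bb) (hj : Gd sm ep w' j bb) : False := by
  classical
  obtain ⟨d, D, hdw, hchD, hndD, hlastD⟩ := hi
  set δl : List (Fin n) := i :: d :: D with hδl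
  obtain ⟨l0, hch0, hlast0⟩ := List.exists_isChain_cons_of_relationReflTransGen hconn
  obtain ⟨Lγ, hγch, hγnd, hγlast⟩ := chain_dedup l0 i hch0
  rw [hlast0] at hγlast
  have hLγne : Lγ ≠ [] := by
    intro h; rw [h] at hγlast; simp at hγlast; exact hij hγlast
  set γl : List (Fin n) := i :: Lγ with hγl
  have hγlne : γl ≠ [] := by simp [hγl]
  set γR := γl.reverse with hγR
  have hγRne : γR ≠ [] := by simp [hγR, hγl]
  have hγRhead : γR.head? = some j := by
    rw [hγR, List.head?_reverse, List.getLast?_eq_getLast hγlne]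
    exact congrArg some hγlast
  have hγchW : γl.Chain' (Av sm ep w) := hγch
  have hγRchW : γR.Chain' (Av sm ep w) := by
    show List.IsChain _ _
    rw [hγR, List.isChain_reverse]
    exact List.IsChain.imp (fun a b h => av_symm h) hγchW
  have hγRnd : γR.Nodup := by rw [hγR]; exact List.nodup_reverse.mpr hγnd
  have hγRchU : γR.Chain' (AdjU ep) := List.IsChain.imp (fun a b h => av_adjU h) hγRchW
  have hiγR : i ∈ γR := by rw [hγR, List.mem_reverse]; simp [hγl]
  have hiδ : i ∈ δl := by simp [hδl]
  set q1 : Fin n → Bool := fun u => decide (u ∉ δl) with hq1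
  set U' := γR.takeWhile q1 with hU'
  set rest' := γR.dropWhile q1 with hrest'
  have hsplit' : U' ++ rest' = γR := List.takeWhile_append_dropWhile (p := q1) (l := γR)
  have hrne' : rest' ≠ [] := by
    intro hemp; rw [hrest'] at hemp
    have h2 := List.dropWhile_eq_nil_iff.mp hemp i hiγR
    simp [hq1] at h2; exact h2 hiδ
  set v := rest'.head hrne' with hv
  have hrv' : rest' = v :: rest'.tail := by rw [hv]; exact (List.cons_head_tail _).symm
  have hrhead' : rest'.head? = some v := by rw [hrv']; rfl
  have hvδ : v ∈ δl := by
    have h2 : q1 v = false := head_dropWhile_mem q1 γR hrne'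
    simpa [hq1] using h2
  have hU'δ : ∀ u ∈ U', u ∉ δl := fun u hu => by
    simpa [hq1] using List.mem_takeWhile_imp hu
  by_cases hjδ : j ∈ δl
  · -- the second path passes through `j`: truncate it at `j`
    have hGwij : Gd sm ep w i j := gd_of_rtg hconn hij
    set s1 : Fin n → Bool := fun u => decide (u ≠ j) with hs1
    set tk := δl.takeWhile s1 with htk
    set dr := δl.dropWhile s1 with hdr
    have hsp : tk ++ dr = δl := List.takeWhile_append_dropWhile (p := s1) (l := δl)
    have hdrne : dr ≠ [] := by
      intro hemp; rw [hdr] at hemp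
      have h2 := List.dropWhile_eq_nil_iff.mp hemp j hjδ
      simp [hs1] at h2
    have hdrhead : dr.head hdrne = j := by
      have h2 : s1 (dr.head hdrne) = false := head_dropWhile_mem s1 δl hdrne
      simpa [hs1] using h2
    have hdrv : dr = j :: dr.tail := by
      conv_lhs => rw [← List.cons_head_tail hdrne]
      rw [hdrhead]
    set P₁ : List (Fin n) := tk ++ [j] with hP₁
    have hpref : P₁ <+: δl :=
      ⟨dr.tail, by rw [hP₁, List.append_assoc, List.singleton_append, ← hdrv, hsp]⟩
    have hchP₁ : P₁.Chain' (AdjU ep) := List.IsChain.prefix hchD hpref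
    have hndP₁ : P₁.Nodup := hpref.sublist.nodup hndD
    have htki : tk = i :: (d :: D).takeWhile s1 := by
      rw [htk, hδl]; exact List.takeWhile_cons_of_pos (by simp [hs1, hij])
    have hheadP₁ : P₁.head? = some i := by rw [hP₁, htki]; rfl
    have hlastP₁ : P₁.getLast? = some j := by rw [hP₁]; exact List.getLast?_concat (l := tk)
    have hsecP₁ : P₁.tail.head? = some d := by
      have htl : P₁.tail = (d :: D).takeWhile s1 ++ [j] := by rw [hP₁, htki]; rfl
      rw [htl]
      by_cases hd : d = j
      · rw [List.takeWhile_cons_of_neg (by simp [hs1, hd])]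
        simp [hd]
      · rw [List.takeWhile_cons_of_pos (by simp [hs1, hd])]
        rfl
    have hGd' : Gd sm ep w' i j := gd_of_list P₁ hchP₁ hndP₁ hheadP₁ hsecP₁ hlastP₁ hdw
    exact twoPaths' hadq hhom hww hGwij hGd'
  · -- `j` is not on the second path: splice the two paths at `v`
    have hU'ne : U' ≠ [] := by
      intro hemp
      have hre : rest' = γR := by rw [← hsplit', hemp]; rfl
      have hvj : v = j := by
        have h5 : ∀ (R : List (Fin n)) (hR : R ≠ []), R = γR → R.head hR = j := by
          intro R hR hRe; subst hRe
          exact Option.some.inj ((List.head?_eq_head hR).symm.trans hγRhead)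
        rw [hv]
        exact h5 rest' hrne' hre
      exact hjδ (hvj ▸ hvδ)
    have hU'head : U'.head? = some j := by
      have h2 : (U' ++ rest').head? = some j := by rw [hsplit']; exact hγRhead
      rwa [List.head?_append_of_ne_nil _ hU'ne] at h2
    set U₂ := U'.tail with hU₂
    have hU'cons : U' = j :: U₂ := by
      conv_lhs => rw [← List.cons_head_tail hU'ne]
      congr 1
      exact Option.some.inj ((List.head?_eq_head hU'ne).symm.trans hU'head)
    set E₁ := δl.takeWhile (fun u => decide (u ≠ v)) with hE₁
    set rE := δl.dropWhile (fun u => decide (u ≠ v)) with hrE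
    have hspE : E₁ ++ rE = δl := List.takeWhile_append_dropWhile (l := δl)
    have hrEne : rE ≠ [] := by
      intro hemp; rw [hrE] at hemp
      have h2 := List.dropWhile_eq_nil_iff.mp hemp v hvδ
      simp at h2
    have hrEhead : rE.head hrEne = v := by
      have h3 : decide ((rE.head hrEne) ≠ v) = false :=
        head_dropWhile_mem (fun u => decide (u ≠ v)) δl hrEne
      exact not_not.mp (of_decide_eq_false h3)
    have hrEv : rE = v :: rE.tail := by
      conv_lhs => rw [← List.cons_head_tail hrEne]
      rw [hrEhead]
    have hrEhead? : rE.head? = some v := by rw [hrEv]; rfl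
    set Cj : List (Fin n) := U' ++ rE with hCj
    have hchγR' : ((U' ++ rest')).Chain' (AdjU ep) := by rw [hsplit']; exact hγRchU
    have hchCj : Cj.Chain' (AdjU ep) := by
      show List.IsChain _ _
      rw [hCj, List.isChain_append]
      refine ⟨(List.isChain_append.mp hchγR').1, List.IsChain.suffix hchD (List.dropWhile_suffix _), ?_⟩
      intro x' hx' y' hy'
      rw [hrEhead?] at hy'
      simp only [Option.mem_def, Option.some.injEq] at hy'
      subst hy'
      exact (List.isChain_append.mp hchγR').2.2 x' hx' v (by rw [hrhead']; rfl)
    have hndCj : Cj.Nodup := by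
      rw [hCj, List.nodup_append]
      refine ⟨(List.takeWhile_prefix q1).sublist.nodup hγRnd,
        (List.dropWhile_suffix _).sublist.nodup hndD, ?_⟩
      intro u hu u' hu' huu
      subst huu
      exact hU'δ u hu ((List.dropWhile_suffix _).sublist.subset hu')
    have hheadCj : Cj.head? = some j := by
      rw [hCj, List.head?_append_of_ne_nil _ hU'ne]; exact hU'head
    have hlastδ : δl.getLast? = some bb := by
      rw [hδl, List.getLast?_eq_getLast (List.cons_ne_nil _ _)]
      refine congrArg some ?_
      rw [List.getLast_cons_cons]
      exact hlastD
    have hlastCj : Cj.getLast? = some bb := by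
      rw [hCj, List.getLast?_append_of_ne_nil _ hrEne]
      have h2 : (E₁ ++ rE).getLast? = rE.getLast? := List.getLast?_append_of_ne_nil _ hrEne
      rw [← h2, hspE]
      exact hlastδ
    -- second element of the spliced path, and its edge type
    have hsec2 : Cj.tail.head? = γR.tail.head? := by
      rw [hCj, hU'cons, ← hsplit', hU'cons]
      show (U₂ ++ rE).head? = (U₂ ++ rest').head?
      cases hU2 : U₂ with
      | nil => simp [hrEhead?, hrhead']
      | cons u us => simp
    have hsecγR : ∃ aa, γR.tail.head? = some aa := by
      rw [← hsplit', hU'cons]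
      cases hU2 : U₂ with
      | nil => exact ⟨v, by simpa using hrhead'⟩
      | cons u us => exact ⟨u, by simp⟩
    obtain ⟨aa, haa⟩ := hsecγR
    have hedge : Av sm ep w j aa := chain'_head_rel hγRchW hγRhead haa
    have hGd2 : Gd sm ep w j bb :=
      gd_of_list Cj hchCj hndCj hheadCj (by rw [hsec2]; exact haa) hlastCj hedge
    exact twoPaths' hadq hhom hww hGd2 hj

/-! ### The base point of each component, and the canonical labelling -/

lemma connR_symm {i j : Fin n} (h : Relation.ReflTransGen (AdjU ep) i j) :
    Relation.ReflTransGen (AdjU ep) j i :=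
  (@Relation.ReflTransGen.symmetric _ _ ⟨fun _ _ hh => adjU_symm hh⟩).symm _ _ h

attribute [local instance 0] Classical.propDecidable

/-- Base point of the component of `i`: `p₀` if `i` is in the component of `p₀`,
otherwise a canonical choice. -/
noncomputable def base (ep : Fin c → Fin n × Fin n) (p₀ : Fin n) (i : Fin n) : Fin n :=
  if Relation.ReflTransGen (AdjU ep) p₀ i then p₀
  else (Finset.univ.filter (fun jj => Relation.ReflTransGen (AdjU ep) i jj)).min'
    ⟨i, Finset.mem_filter.mpr ⟨Finset.mem_univ i, Relation.ReflTransGen.refl⟩⟩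

variable {p₀ : Fin n}

lemma base_of_conn {i : Fin n} (h : Relation.ReflTransGen (AdjU ep) p₀ i) :
    base ep p₀ i = p₀ := by
  unfold base; rw [if_pos h]

lemma base_p₀ : base ep p₀ p₀ = p₀ := base_of_conn Relation.ReflTransGen.refl

lemma base_conn (i : Fin n) : Relation.ReflTransGen (AdjU ep) i (base ep p₀ i) := by
  classical
  unfold base
  split_ifs with h
  · exact connR_symm h
  · have := Finset.min'_mem
      (Finset.univ.filter (fun jj => Relation.ReflTransGen (AdjU ep) i jj))
      ⟨i, Finset.mem_filter.mpr ⟨Finset.mem_univ i, Relation.ReflTransGen.refl⟩⟩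
    exact (Finset.mem_filter.mp this).2

lemma base_congr {i k : Fin n} (h : Relation.ReflTransGen (AdjU ep) i k) :
    base ep p₀ i = base ep p₀ k := by
  classical
  unfold base
  by_cases h1 : Relation.ReflTransGen (AdjU ep) p₀ i
  · rw [if_pos h1, if_pos (h1.trans h)]
  · rw [if_neg h1, if_neg (fun h2 => h1 (h2.trans (connR_symm h)))]
    have hset : Finset.univ.filter (fun jj => Relation.ReflTransGen (AdjU ep) i jj)
        = Finset.univ.filter (fun jj => Relation.ReflTransGen (AdjU ep) k jj) := by
      ext u
      simp only [Finset.mem_filter, Finset.mem_univ, true_and]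
      exact ⟨fun hh => (connR_symm h).trans hh, fun hh => h.trans hh⟩
    have hmin : ∀ (S S' : Finset (Fin n)) (hS : S.Nonempty) (hS' : S'.Nonempty),
        S = S' → S.min' hS = S'.min' hS' := by
      intro S S' hS hS' hh; subst hh; rfl
    exact hmin _ _ _ _ hset

/-- The canonical labelling: `i` is labelled `1` iff there is a simple path from `i`
to the base point of its component starting with an A-edge. -/
noncomputable def lab (sm : Fin c → Bool) (ep : Fin c → Fin n × Fin n) (p₀ : Fin n)
    (i : Fin n) : Bool :=
  decide (Gd sm ep true i (base ep p₀ i))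

lemma lab_true_iff (i : Fin n) :
    lab sm ep p₀ i = true ↔ Gd sm ep true i (base ep p₀ i) := by
  rw [lab]
  exact decide_eq_true_iff

lemma lab_p₀ : lab sm ep p₀ p₀ = false := by
  rw [Bool.eq_false_iff]
  intro h
  have h2 := (lab_true_iff p₀).mp h
  rw [base_p₀] at h2
  exact gd_ne h2 rfl

lemma lab_false_gd {i : Fin n} (hf : lab sm ep p₀ i = false) (hib : i ≠ base ep p₀ i) :
    Gd sm ep false i (base ep p₀ i) := by
  obtain ⟨l0, hch0, hlast0⟩ :=
    List.exists_isChain_cons_of_relationReflTransGen (base_conn (ep := ep) (p₀ := p₀) i)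
  obtain ⟨L', h1, h2, h3⟩ := chain_dedup l0 i hch0
  rw [hlast0] at h3
  match L', h1, h2, h3 with
  | [], _, _, h3 => exact absurd h3 hib
  | a :: L₂, h1, h2, h3 =>
    change List.IsChain _ (_ :: a :: L₂) at h1
    rw [List.chain_cons] at h1
    obtain ⟨t, hor⟩ := h1.1
    have hgd : Gd sm ep (sm t) i (base ep p₀ i) := by
      refine ⟨a, L₂, ⟨t, rfl, hor⟩, List.chain_cons.mpr h1, h2, ?_⟩
      rw [List.getLast_cons_cons] at h3; exact h3
    cases hsmt : sm t with
    | false => rw [hsmt] at hgd; exact hgd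
    | true =>
      rw [hsmt] at hgd
      rw [← lab_true_iff i] at hgd
      rw [hf] at hgd
      exact Bool.noConfusion hgd

/-- A-zone condition for the canonical labelling. -/
lemma condA (hadq : ∀ t, (ep t).1 ≠ (ep t).2) (hhom : Homog sm ep) :
    ∀ i j, Conn sm ep true i j → lab sm ep p₀ i = false → lab sm ep p₀ j = false →
      i = j := by
  intro i j hc hfi hfj
  by_contra hij
  have hcr : Relation.ReflTransGen (AdjU ep) i j :=
    Relation.ReflTransGen.mono (fun a b h => av_adjU h) _ _ hc
  have hb : base ep p₀ i = base ep p₀ j := base_congr hcr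
  have hcs : Relation.ReflTransGen (Av sm ep true) j i :=
    (@Relation.ReflTransGen.symmetric _ _ ⟨fun _ _ hh => av_symm hh⟩).symm _ _ hc
  by_cases hib : i = base ep p₀ i
  · have hgd : Gd sm ep true j (base ep p₀ j) := by
      rw [← hb, ← hib]
      exact gd_of_rtg hcs (Ne.symm hij)
    rw [← lab_true_iff] at hgd
    rw [hfj] at hgd
    exact Bool.noConfusion hgd
  by_cases hjb : j = base ep p₀ j
  · have hgd : Gd sm ep true i (base ep p₀ i) := by
      rw [hb, ← hjb]
      exact gd_of_rtg hc hij
    rw [← lab_true_iff] at hgd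
    rw [hfi] at hgd
    exact Bool.noConfusion hgd
  · have hgi : Gd sm ep false i (base ep p₀ i) := lab_false_gd hfi hib
    have hgj : Gd sm ep false j (base ep p₀ j) := lab_false_gd hfj hjb
    rw [← hb] at hgj
    exact Lgen hadq hhom (by simp) hij hc hgi hgj

/-- B-zone condition for the modified labelling. -/
lemma condB (hadq : ∀ t, (ep t).1 ≠ (ep t).2) (hhom : Homog sm ep) :
    ∀ i j, Conn sm ep false i j → Function.update (lab sm ep p₀) p₀ true i = true →
      Function.update (lab sm ep p₀) p₀ true j = true → i = j := by
  intro i j hc hxi hxj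
  by_contra hij
  have hcs : Relation.ReflTransGen (Av sm ep false) j i :=
    (@Relation.ReflTransGen.symmetric _ _ ⟨fun _ _ hh => av_symm hh⟩).symm _ _ hc
  by_cases hip : i = p₀
  · rw [hip] at hc hcs hij
    have hjp : j ≠ p₀ := fun h => hij h.symm
    rw [Function.update_of_ne hjp] at hxj
    have hGj : Gd sm ep true j (base ep p₀ j) := (lab_true_iff _).mp hxj
    have hbj : base ep p₀ j = p₀ :=
      base_of_conn (Relation.ReflTransGen.mono (fun a b h => av_adjU h) _ _ hc)
    rw [hbj] at hGj
    exact twoPaths' hadq hhom (by simp) hGj (gd_of_rtg hcs hjp)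
  by_cases hjp : j = p₀
  · rw [hjp] at hc hcs hij
    rw [Function.update_of_ne hip] at hxi
    have hGi : Gd sm ep true i (base ep p₀ i) := (lab_true_iff _).mp hxi
    have hbi : base ep p₀ i = p₀ := by
      refine base_of_conn (connR_symm ?_)
      exact Relation.ReflTransGen.mono (fun a b h => av_adjU h) _ _ hc
    rw [hbi] at hGi
    exact twoPaths' hadq hhom (by simp) hGi (gd_of_rtg hc hij)
  · rw [Function.update_of_ne hip] at hxi
    rw [Function.update_of_ne hjp] at hxj
    have hGi : Gd sm ep true i (base ep p₀ i) := (lab_true_iff _).mp hxi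
    have hGj : Gd sm ep true j (base ep p₀ j) := (lab_true_iff _).mp hxj
    have hb : base ep p₀ i = base ep p₀ j :=
      base_congr (Relation.ReflTransGen.mono (fun a b h => av_adjU h) _ _ hc)
    rw [← hb] at hGj
    exact Lgen hadq hhom (by simp) hij hc hGi hGj

end HAE

theorem homogeneously_adequate_enhancements (c n : ℕ) (sm : Fin c → Bool)
    (ep : Fin c → Fin n × Fin n)
    (hadq : ∀ t, (ep t).1 ≠ (ep t).2)
    (hhom : Homog sm ep)
    (p₀ : Fin n) :
    ∃ Xm Xp : Fin n → Bool,
      Xm p₀ = true ∧ Xp p₀ = false ∧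
      (∀ i, i ≠ p₀ → Xm i = Xp i) ∧
      (∀ i j, Conn sm ep true i j → Xm i = false → Xm j = false → i = j) ∧
      (∀ i j, Conn sm ep false i j → Xm i = true → Xm j = true → i = j) ∧
      (∀ i j, Conn sm ep true i j → Xp i = false → Xp j = false → i = j) ∧
      (∀ i j, Conn sm ep false i j → Xp i = true → Xp j = true → i = j) ∧
      ∀ w iw : ℤ,
        w + iw - (((Finset.univ.filter fun l => Xp l = true).card : ℤ)
            - ((Finset.univ.filter fun l => Xp l = false).card : ℤ))
          = (w + iw - (((Finset.univ.filter fun l => Xm l = true).card : ℤ)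
            - ((Finset.univ.filter fun l => Xm l = false).card : ℤ))) + 2 := by
  classical
  refine ⟨Function.update (HAE.lab sm ep p₀) p₀ true, HAE.lab sm ep p₀,
    ?_, ?_, ?_, ?_, ?_, ?_, ?_, ?_⟩
  · rw [Function.update_self]
  · exact HAE.lab_p₀
  · intro i hi; rw [Function.update_of_ne hi]
  · -- A-zones for Xm
    intro i j hc h1 h2
    have hi : i ≠ p₀ := by
      intro h; rw [h, Function.update_self] at h1; exact Bool.noConfusion h1
    have hj : j ≠ p₀ := by
      intro h; rw [h, Function.update_self] at h2; exact Bool.noConfusion h2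
    rw [Function.update_of_ne hi] at h1
    rw [Function.update_of_ne hj] at h2
    exact HAE.condA hadq hhom i j hc h1 h2
  · -- B-zones for Xm
    exact HAE.condB hadq hhom
  · -- A-zones for Xp
    exact HAE.condA hadq hhom
  · -- B-zones for Xp
    intro i j hc h1 h2
    refine HAE.condB (p₀ := p₀) hadq hhom i j hc ?_ ?_
    · by_cases hi : i = p₀
      · rw [hi, Function.update_self]
      · rw [Function.update_of_ne hi]; exact h1
    · by_cases hj : j = p₀
      · rw [hj, Function.update_self]
      · rw [Function.update_of_ne hj]; exact h2
  · -- the grading shift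
    intro w iw
    have hfp : HAE.lab sm ep p₀ p₀ = false := HAE.lab_p₀
    have hT : (Finset.univ.filter fun l => Function.update (HAE.lab sm ep p₀) p₀ true l = true)
        = insert p₀ (Finset.univ.filter fun l => HAE.lab sm ep p₀ l = true) := by
      ext u
      simp only [Finset.mem_filter, Finset.mem_univ, true_and, Finset.mem_insert]
      by_cases hu : u = p₀
      · subst hu; simp [Function.update_self]
      · simp [Function.update_of_ne hu, hu]
    have hF : (Finset.univ.filter fun l => HAE.lab sm ep p₀ l = false)
        = insert p₀ (Finset.univ.filter fun l => Function.update (HAE.lab sm ep p₀) p₀ true l = false) := by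
      ext u
      simp only [Finset.mem_filter, Finset.mem_univ, true_and, Finset.mem_insert]
      by_cases hu : u = p₀
      · subst hu; simp [hfp]
      · simp [Function.update_of_ne hu, hu]
    have hpT : p₀ ∉ (Finset.univ.filter fun l => HAE.lab sm ep p₀ l = true) := by
      simp [hfp]
    have hpF : p₀ ∉ (Finset.univ.filter fun l =>
        Function.update (HAE.lab sm ep p₀) p₀ true l = false) := by
      simp [Function.update_self]
    rw [hT, hF, Finset.card_insert_of_notMem hpT, Finset.card_insert_of_notMem hpF]
    push_cast
    ring
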